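/- If A has a polar decomposition A = PU with P positive semidefinite and U unitary such that (U*)^k P U^k commutes with P for every k ∈ ℕ, then A is unitarily equivalent to a weighted permutation matrix. -/

import Mathlib

open Matrix ComplexOrder

def IsWeightedPerm {n : ℕ} (A : Matrix (Fin n) (Fin n) ℂ) : Prop :=
  (∀ i j₁ j₂, A i j₁ ≠ 0 → A i j₂ ≠ 0 → j₁ = j₂) ∧
  (∀ j i₁ i₂, A i₁ j ≠ 0 → A i₂ j ≠ 0 → i₁ = i₂)

namespace WPaux

open Module

noncomputable section

variable {n : ℕ}

local notation "Ee" => EuclideanSpace ℂ (Fin n)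

/-- `mulVec` as a linear endomorphism of Euclidean space. -/
def mvL (M : Matrix (Fin n) (Fin n) ℂ) : Ee →ₗ[ℂ] Ee where
  toFun x := WithLp.toLp 2 (M.mulVec x)
  map_add' x y := by simp [Matrix.mulVec_add]
  map_smul' c x := by simp [Matrix.mulVec_smul]

lemma mvL_mul (M N : Matrix (Fin n) (Fin n) ℂ) (x : Ee) :
    mvL (M * N) x = mvL M (mvL N x) := by
  show WithLp.toLp 2 ((M * N).mulVec x) = WithLp.toLp 2 (M.mulVec (N.mulVec x))
  rw [Matrix.mulVec_mulVec]

lemma mvL_one (x : Ee) : mvL (1 : Matrix (Fin n) (Fin n) ℂ) x = x := by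
  show WithLp.toLp 2 ((1 : Matrix (Fin n) (Fin n) ℂ).mulVec x) = x
  simp

lemma inner_mvL_left (M : Matrix (Fin n) (Fin n) ℂ) (x y : Ee) :
    (inner ℂ (mvL M x) y : ℂ) = inner ℂ x (mvL Mᴴ y) := by
  simp only [mvL, LinearMap.coe_mk, AddHom.coe_mk, PiLp.inner_apply, RCLike.inner_apply,
    Matrix.mulVec, dotProduct, Matrix.conjTranspose_apply, map_sum, _root_.map_mul,
    Finset.mul_sum, Finset.sum_mul]
  rw [Finset.sum_comm]
  apply Finset.sum_congr rfl; intro i _; apply Finset.sum_congr rfl; intro j _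
  simp [mul_comm, mul_left_comm]

lemma inner_mvL_right (M : Matrix (Fin n) (Fin n) ℂ) (x y : Ee) :
    (inner ℂ x (mvL M y) : ℂ) = inner ℂ (mvL Mᴴ x) y := by
  rw [inner_mvL_left, Matrix.conjTranspose_conjTranspose]

/-- Eigenvectors of a Hermitian matrix for distinct eigenvalues are orthogonal. -/
lemma ortho_of_eig {M : Matrix (Fin n) (Fin n) ℂ} (hM : M.IsHermitian) {x y : Ee} {a b : ℂ}
    (hx : mvL M x = a • x) (hy : mvL M y = b • y) (hx0 : x ≠ 0) (hab : a ≠ b) :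
    (inner ℂ x y : ℂ) = 0 := by
  have hsym : ∀ u v : Ee, (inner ℂ (mvL M u) v : ℂ) = inner ℂ u (mvL M v) := by
    intro u v; rw [inner_mvL_left, hM.eq]
  have ha : (starRingEnd ℂ) a = a := by
    have h1 := hsym x x
    rw [hx, inner_smul_left, inner_smul_right] at h1
    have h2 : (inner ℂ x x : ℂ) ≠ 0 := by
      rw [inner_self_ne_zero]; exact hx0
    exact mul_right_cancel₀ h2 h1
  have h1 := hsym x y
  rw [hx, hy, inner_smul_left, inner_smul_right, ha] at h1
  by_contra h
  exact hab (mul_right_cancel₀ h h1)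

lemma norm_sq_one_of (x : Ee) (h : ‖x‖ = 1) : (inner ℂ x x : ℂ) = 1 := by
  rw [inner_self_eq_norm_sq_to_K, h]; norm_num

section PU

variable (P U : Matrix (Fin n) (Fin n) ℂ)

/-- The conjugated family. -/
def Pk (k : ℕ) : Matrix (Fin n) (Fin n) ℂ := Uᴴ ^ k * P * U ^ k

variable {P U}
variable (hP : P.IsHermitian) (hU : Uᴴ * U = 1)
    (hcomm : ∀ k : ℕ, (Uᴴ ^ k * P * U ^ k) * P = P * (Uᴴ ^ k * P * U ^ k))

lemma Pk_zero : Pk P U 0 = P := by simp [Pk]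

include hP in
lemma Pk_herm (k : ℕ) : (Pk P U k).IsHermitian := by
  unfold Matrix.IsHermitian Pk
  rw [Matrix.conjTranspose_mul, Matrix.conjTranspose_mul, Matrix.conjTranspose_pow,
    Matrix.conjTranspose_pow, Matrix.conjTranspose_conjTranspose, hP.eq, mul_assoc]

include hU in
lemma hUU : U * Uᴴ = 1 := mul_eq_one_comm.mp hU

include hU in
lemma pow_mul_pow_H (j : ℕ) : U ^ j * Uᴴ ^ j = 1 := by
  induction j with
  | zero => simp
  | succ j ih =>
    rw [pow_succ, pow_succ']
    calc U ^ j * U * (Uᴴ * Uᴴ ^ j) = U ^ j * (U * Uᴴ) * Uᴴ ^ j := by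
          simp only [mul_assoc]
    _ = 1 := by rw [hUU hU]; simpa using ih

include hU in
lemma pow_H_mul_pow (j : ℕ) : Uᴴ ^ j * U ^ j = 1 := by
  induction j with
  | zero => simp
  | succ j ih =>
    rw [pow_succ, pow_succ']
    calc Uᴴ ^ j * Uᴴ * (U * U ^ j) = Uᴴ ^ j * (Uᴴ * U) * U ^ j := by
          simp only [mul_assoc]
    _ = 1 := by rw [hU]; simpa using ih

include hU in
lemma Pk_mul_U (k : ℕ) : Pk P U k * U = U * Pk P U (k + 1) := by
  have h : U * Uᴴ ^ (k + 1) = Uᴴ ^ k := by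
    rw [pow_succ', ← mul_assoc, hUU hU, one_mul]
  calc Pk P U k * U = Uᴴ ^ k * P * U ^ (k + 1) := by rw [Pk, pow_succ, mul_assoc]
  _ = U * (Uᴴ ^ (k+1) * P * U ^ (k+1)) := by rw [← h]; simp only [mul_assoc]
  _ = U * Pk P U (k + 1) := rfl

include hU in
lemma Pk_mul_pow (k j : ℕ) : Pk P U k * U ^ j = U ^ j * Pk P U (k + j) := by
  induction j with
  | zero => simp
  | succ j ih =>
    calc Pk P U k * U ^ (j + 1) = Pk P U k * U ^ j * U := by rw [pow_succ, mul_assoc]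
    _ = U ^ j * (Pk P U (k + j) * U) := by rw [ih, mul_assoc]
    _ = U ^ j * (U * Pk P U (k + j + 1)) := by rw [Pk_mul_U hU]
    _ = U ^ (j + 1) * Pk P U (k + (j + 1)) := by
        rw [pow_succ, show k + j + 1 = k + (j + 1) by omega, mul_assoc]

lemma conj_mul (X Y A B : Matrix (Fin n) (Fin n) ℂ) (h : Y * X = 1) :
    (X * A * Y) * (X * B * Y) = X * (A * B) * Y := by
  have h1 : X * A * Y * (X * B * Y) = X * A * (Y * X * (B * Y)) := by
    simp only [mul_assoc]
  rw [h1, h, one_mul]; simp only [mul_assoc]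

lemma conj_Pk (j t : ℕ) : Uᴴ ^ j * Pk P U t * U ^ j = Pk P U (t + j) := by
  unfold Pk
  calc Uᴴ ^ j * (Uᴴ ^ t * P * U ^ t) * U ^ j
      = (Uᴴ ^ j * Uᴴ ^ t) * P * (U ^ t * U ^ j) := by simp only [mul_assoc]
    _ = Uᴴ ^ (j + t) * P * U ^ (t + j) := by rw [← pow_add, ← pow_add]
    _ = Uᴴ ^ (t + j) * P * U ^ (t + j) := by rw [add_comm j t]

include hU hcomm in
lemma Pk_commute (j k : ℕ) : Pk P U j * Pk P U k = Pk P U k * Pk P U j := by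
  have key : ∀ a t : ℕ, Pk P U a * Pk P U (a + t) = Pk P U (a + t) * Pk P U a := by
    intro a t
    have h1 : Pk P U a = Uᴴ ^ a * Pk P U 0 * U ^ a := by
      rw [conj_Pk (P := P) (U := U) a 0, Nat.zero_add]
    have h2 : Pk P U (a + t) = Uᴴ ^ a * Pk P U t * U ^ a := by
      rw [conj_Pk (P := P) (U := U) a t, add_comm]
    have hc : Pk P U 0 * Pk P U t = Pk P U t * Pk P U 0 := by
      rw [Pk_zero]; exact (hcomm t).symm
    have hmid : U ^ a * Uᴴ ^ a = 1 := pow_mul_pow_H hU a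
    rw [h1, h2, conj_mul _ _ _ _ hmid, conj_mul _ _ _ _ hmid, hc]
  rcases le_total j k with h | h
  · have := key j (k - j); rwa [Nat.add_sub_cancel' h] at this
  · have := (key k (j - k)).symm; rwa [Nat.add_sub_cancel' h] at this

include hU in
lemma shift_eig {x : Ee} {ν : ℕ → ℂ} (hx : ∀ k, mvL (Pk P U k) x = ν k • x) (j : ℕ) :
    ∀ k, mvL (Pk P U k) (mvL (U ^ j) x) = ν (k + j) • mvL (U ^ j) x := by
  intro k
  rw [← mvL_mul, Pk_mul_pow hU, mvL_mul, hx, _root_.map_smul]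

include hU in
lemma norm_mvL_pow (j : ℕ) (x : Ee) : ‖mvL (U ^ j) x‖ = ‖x‖ := by
  have h : (inner ℂ (mvL (U ^ j) x) (mvL (U ^ j) x) : ℂ) = inner ℂ x x := by
    rw [inner_mvL_left, ← mvL_mul, Matrix.conjTranspose_pow, pow_H_mul_pow hU, mvL_one]
  have h2 : ‖mvL (U ^ j) x‖ ^ 2 = ‖x‖ ^ 2 := by
    rw [inner_self_eq_norm_sq_to_K, inner_self_eq_norm_sq_to_K] at h
    exact_mod_cast h
  nlinarith [norm_nonneg (mvL (U ^ j) x), norm_nonneg x]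


open Module in
include hP hU hcomm in
lemma core : ∀ d : ℕ, ∀ W : Submodule ℂ Ee, finrank ℂ W = d →
    (∀ x ∈ W, mvL U x ∈ W) → (∀ x ∈ W, mvL Uᴴ x ∈ W) →
    (∀ k, ∀ x ∈ W, mvL (Pk P U k) x ∈ W) →
    ∃ (v : Fin d → Ee) (g : Equiv.Perm (Fin d)) (w : Fin d → ℂ),
      Orthonormal ℂ v ∧ (∀ i, v i ∈ W) ∧ ∀ i, mvL (P * U) (v i) = w i • v (g i) := by
  classical
  intro d
  induction d using Nat.strong_induction_on with
  | _ d IH =>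
  intro W hW hUW hUHW hPW
  rcases Nat.eq_zero_or_pos d with hd | hd
  · subst hd
    exact ⟨Fin.elim0, Equiv.refl _, Fin.elim0,
      orthonormal_iff_ite.mpr (fun i => i.elim0), fun i => i.elim0, fun i => i.elim0⟩
  have hWne : W ≠ ⊥ := by
    intro h
    rw [h, finrank_bot] at hW
    omega
  -- Step 1: find a minimal nonzero Pk-invariant subspace of W; all Pk act as scalars on it
  set Qp : Submodule ℂ Ee → Prop := fun W' =>
    W' ≤ W ∧ W' ≠ ⊥ ∧ ∀ k, ∀ x ∈ W', mvL (Pk P U k) x ∈ W' with hQdef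
  set SS : Set ℕ := {m | ∃ W', Qp W' ∧ finrank ℂ W' = m} with hSS
  have hSne : SS.Nonempty := ⟨d, W, ⟨le_refl W, hWne, hPW⟩, hW⟩
  have hmemInf := Nat.sInf_mem hSne
  simp only [hSS, Set.mem_setOf_eq] at hmemInf
  obtain ⟨W₀, ⟨hW₀W, hW₀ne, hW₀inv⟩, hW₀rank⟩ := hmemInf
  have hmin : ∀ W', Qp W' → sInf SS ≤ finrank ℂ W' := fun W' hQ' => Nat.sInf_le ⟨W', hQ', rfl⟩
  have hscal : ∀ k : ℕ, ∃ μ : ℂ, ∀ x ∈ W₀, mvL (Pk P U k) x = μ • x := by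
    intro k
    haveI : Nontrivial W₀ := Submodule.nontrivial_iff_ne_bot.mpr hW₀ne
    obtain ⟨μ, hμ⟩ := Module.End.exists_eigenvalue
      (LinearMap.restrict (mvL (Pk P U k)) (hW₀inv k))
    obtain ⟨z, hz⟩ := hμ.exists_hasEigenvector
    refine ⟨μ, ?_⟩
    have hz1 : mvL (Pk P U k) (z : Ee) = μ • (z : Ee) := by
      have h2 := congrArg (Subtype.val) hz.apply_eq_smul
      rw [LinearMap.restrict_coe_apply] at h2
      simpa using h2
    set K := LinearMap.ker (mvL (Pk P U k) - μ • LinearMap.id) with hK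
    have hmemK : ∀ x : Ee, x ∈ K ↔ mvL (Pk P U k) x = μ • x := by
      intro x
      simp [hK, LinearMap.mem_ker, sub_eq_zero, LinearMap.sub_apply, LinearMap.smul_apply]
    have hzne : (z : Ee) ≠ 0 := by simpa using hz.2
    have hQ1 : Qp (W₀ ⊓ K) := by
      refine ⟨le_trans inf_le_left hW₀W, ?_, ?_⟩
      · rw [Submodule.ne_bot_iff]
        exact ⟨z, ⟨z.2, (hmemK z).mpr hz1⟩, hzne⟩
      · intro j x hx
        refine ⟨hW₀inv j x hx.1, (hmemK _).mpr ?_⟩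
        rw [← mvL_mul, Pk_commute hU hcomm, mvL_mul, (hmemK x).mp hx.2, _root_.map_smul]
    have heq : W₀ ⊓ K = W₀ := by
      apply Submodule.eq_of_le_of_finrank_le inf_le_left
      rw [hW₀rank]
      exact hmin _ hQ1
    intro x hx
    have hx' : x ∈ W₀ ⊓ K := heq.symm ▸ hx
    exact (hmemK x).mp hx'.2
  choose lam hlam using hscal
  -- a unit joint eigenvector
  obtain ⟨x0, hx0W, hx00⟩ := Submodule.exists_mem_ne_zero_of_ne_bot hW₀ne
  set v₀ : Ee := (‖x0‖ : ℂ)⁻¹ • x0 with hv₀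
  have hv₀W₀ : v₀ ∈ W₀ := Submodule.smul_mem _ _ hx0W
  have hv₀n : ‖v₀‖ = 1 := norm_smul_inv_norm hx00
  have hv₀eig : ∀ k, mvL (Pk P U k) v₀ = lam k • v₀ := fun k => hlam k v₀ hv₀W₀
  have hUWpow : ∀ (j : ℕ) (x : Ee), x ∈ W → mvL (U ^ j) x ∈ W := by
    intro j
    induction j with
    | zero => intro x hx; rw [pow_zero, mvL_one]; exact hx
    | succ j ih => intro x hx; rw [pow_succ', mvL_mul]; exact hUW _ (ih x hx)
  set uvec : ℕ → Ee := fun j => mvL (U ^ j) v₀ with huvec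
  have huv_mem : ∀ j, uvec j ∈ W := fun j => hUWpow j v₀ (hW₀W hv₀W₀)
  have huv_eig : ∀ (j k : ℕ), mvL (Pk P U k) (uvec j) = lam (k + j) • uvec j :=
    fun j k => shift_eig hU hv₀eig j k
  have huv_norm : ∀ j, ‖uvec j‖ = 1 := by
    intro j
    simp only [huvec]
    rw [norm_mvL_pow hU]
    exact hv₀n
  have huv_ne : ∀ j, uvec j ≠ 0 := by
    intro j h
    have := huv_norm j
    rw [h, norm_zero] at this
    norm_num at this
  -- pigeonhole: the eigenvalue sequence is eventually periodic
  have hrep : ∃ a b : ℕ, a < b ∧ ∀ k, lam (k + a) = lam (k + b) := by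
    by_contra hcon
    push_neg at hcon
    have hcon' : ∀ a b : ℕ, a ≠ b → ∃ k, lam (k + a) ≠ lam (k + b) := by
      intro a b hab
      rcases lt_or_gt_of_ne hab with h | h
      · exact hcon a b h
      · obtain ⟨k, hk⟩ := hcon b a h
        exact ⟨k, fun he => hk he.symm⟩
    have hON : Orthonormal ℂ (fun j : Fin (n + 1) => uvec j) := by
      rw [orthonormal_iff_ite]
      intro i j
      by_cases hij : i = j
      · subst hij; rw [if_pos rfl]; exact norm_sq_one_of _ (huv_norm i)
      · rw [if_neg hij]
        obtain ⟨k, hk⟩ := hcon' i j (fun h => hij (Fin.ext h))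
        exact ortho_of_eig (Pk_herm hP k) (huv_eig i k) (huv_eig j k) (huv_ne i) hk
    have hcard := hON.linearIndependent.fintype_card_le_finrank
    rw [Fintype.card_fin, finrank_euclideanSpace_fin] at hcard
    omega
  obtain ⟨a, b, hab, hper⟩ := hrep
  set μf : ℕ → ℂ := fun k => lam (k + a) with hμf
  have hex : ∃ t, 0 < t ∧ ∀ k, μf (k + t) = μf k := by
    refine ⟨b - a, by omega, fun k => ?_⟩
    simp only [hμf]
    have h1 : k + (b - a) + a = k + b := by omega
    rw [h1, ← hper k]
  set m := Nat.find hex with hmdef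
  obtain ⟨hm0, hmper⟩ := Nat.find_spec hex
  have hmul : ∀ (N k : ℕ), μf (k + N * m) = μf k := by
    intro N
    induction N with
    | zero => simp
    | succ N ih =>
      intro k
      have h1 : k + (N + 1) * m = k + N * m + m := by ring
      rw [h1, hmper (k + N * m), ih k]
  have hdist : ∀ i j : ℕ, i < j → j < m → ∃ k, μf (k + i) ≠ μf (k + j) := by
    intro i j hij hjm
    by_contra hcon
    push_neg at hcon
    have hQt : 0 < j - i ∧ ∀ k, μf (k + (j - i)) = μf k := by
      refine ⟨by omega, fun k => ?_⟩
      have hge : i ≤ i * m := Nat.le_mul_of_pos_right i hm0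
      have e1 : k + (j - i) + i * m = k + i * m - i + j := by omega
      have e2 : k + i * m - i + i = k + i * m := by omega
      calc μf (k + (j - i)) = μf (k + (j - i) + i * m) := (hmul i _).symm
        _ = μf (k + i * m - i + j) := by rw [e1]
        _ = μf (k + i * m - i + i) := (hcon _).symm
        _ = μf (k + i * m) := by rw [e2]
        _ = μf k := hmul i _
    exact Nat.find_min hex (by omega) hQt
  -- the joint eigenspace for the periodic sequence μf, inside W
  set G : Submodule ℂ Ee :=
    W ⊓ (⨅ k : ℕ, LinearMap.ker (mvL (Pk P U k) - μf k • LinearMap.id)) with hG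
  have hmemG : ∀ x : Ee, x ∈ G ↔ x ∈ W ∧ ∀ k, mvL (Pk P U k) x = μf k • x := by
    intro x
    simp [hG, Submodule.mem_inf, Submodule.mem_iInf, LinearMap.mem_ker, LinearMap.sub_apply,
      LinearMap.smul_apply, sub_eq_zero]
  have he₀G : uvec a ∈ G := by
    rw [hmemG]
    exact ⟨huv_mem a, fun k => huv_eig a k⟩
  have hGU : ∀ x ∈ G, mvL (U ^ m) x ∈ G := by
    intro x hx
    rw [hmemG] at hx ⊢
    refine ⟨hUWpow m x hx.1, fun k => ?_⟩
    rw [shift_eig hU hx.2 m k, hmper k]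
  haveI : Nontrivial G :=
    Submodule.nontrivial_iff_ne_bot.mpr ((Submodule.ne_bot_iff _).mpr ⟨uvec a, he₀G, huv_ne a⟩)
  obtain ⟨c, hc⟩ := Module.End.exists_eigenvalue (LinearMap.restrict (mvL (U ^ m)) hGU)
  obtain ⟨z, hz⟩ := hc.exists_hasEigenvector
  have hz1 : mvL (U ^ m) (z : Ee) = c • (z : Ee) := by
    have h2 := congrArg (Subtype.val) hz.apply_eq_smul
    rw [LinearMap.restrict_coe_apply] at h2
    simpa using h2
  have hzne : (z : Ee) ≠ 0 := by simpa using hz.2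
  have hcne : c ≠ 0 := by
    intro h0
    have hn := norm_mvL_pow hU m (z : Ee)
    rw [hz1, h0, zero_smul, norm_zero] at hn
    exact hzne (norm_eq_zero.mp hn.symm)
  set e1 : Ee := (‖(z : Ee)‖ : ℂ)⁻¹ • (z : Ee) with he1def
  have he1G : e1 ∈ G := Submodule.smul_mem _ _ z.2
  have he1n : ‖e1‖ = 1 := norm_smul_inv_norm hzne
  have he1ne : e1 ≠ 0 := by
    intro h
    rw [h, norm_zero] at he1n
    norm_num at he1n
  have he1eig : ∀ k, mvL (Pk P U k) e1 = μf k • e1 := ((hmemG e1).mp he1G).2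
  have he1W : e1 ∈ W := ((hmemG e1).mp he1G).1
  have he1U : mvL (U ^ m) e1 = c • e1 := by
    rw [he1def, _root_.map_smul, hz1, smul_comm]
  -- the cycle
  set cyc : Fin m → Ee := fun j => mvL (U ^ (j : ℕ)) e1 with hcyc
  have hcyc_mem : ∀ j, cyc j ∈ W := fun j => hUWpow _ _ he1W
  have hcyc_eig : ∀ (j : Fin m) (k : ℕ), mvL (Pk P U k) (cyc j) = μf (k + (j : ℕ)) • cyc j :=
    fun j k => shift_eig hU he1eig (j : ℕ) k
  have hcyc_norm : ∀ j, ‖cyc j‖ = 1 := by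
    intro j
    simp only [hcyc]
    rw [norm_mvL_pow hU]
    exact he1n
  have hcyc_ne : ∀ j, cyc j ≠ 0 := by
    intro j h
    have := hcyc_norm j
    rw [h, norm_zero] at this
    norm_num at this
  have hcyc_ON : Orthonormal ℂ cyc := by
    rw [orthonormal_iff_ite]
    intro i j
    by_cases hij : i = j
    · subst hij; rw [if_pos rfl]; exact norm_sq_one_of _ (hcyc_norm i)
    · rw [if_neg hij]
      have hne : (i : ℕ) ≠ (j : ℕ) := fun h => hij (Fin.ext h)
      rcases lt_or_gt_of_ne hne with h | h
      · obtain ⟨k, hk⟩ := hdist i j h j.2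
        exact ortho_of_eig (Pk_herm hP k) (hcyc_eig i k) (hcyc_eig j k) (hcyc_ne i) hk
      · obtain ⟨k, hk⟩ := hdist j i h i.2
        exact ortho_of_eig (Pk_herm hP k) (hcyc_eig i k) (hcyc_eig j k) (hcyc_ne i)
          (fun he => hk he.symm)
  -- the cycle permutation
  set fc : Fin m → Fin m := fun j => if h : (j : ℕ) + 1 < m then ⟨(j : ℕ) + 1, h⟩ else ⟨0, hm0⟩
    with hfc
  have hfc_inj : Function.Injective fc := by
    intro i j hij
    have hi := i.2
    have hj := j.2
    simp only [hfc] at hij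
    split_ifs at hij with h1 h2 h2 <;> rw [Fin.mk.injEq] at hij <;> exact Fin.ext (by omega)
  set gc : Equiv.Perm (Fin m) := Equiv.ofBijective fc (Finite.injective_iff_bijective.mp hfc_inj)
    with hgc
  have hgc_apply : ∀ j, gc j = fc j := fun j => rfl
  have hcyc0 : cyc ⟨0, hm0⟩ = e1 := by
    simp only [hcyc]
    rw [pow_zero, mvL_one]
  have hUcyc : ∀ j : Fin m, mvL U (cyc j) = (if (j : ℕ) + 1 < m then 1 else c) • cyc (fc j) := by
    intro j
    have h1 : mvL U (cyc j) = mvL (U ^ ((j : ℕ) + 1)) e1 := by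
      simp only [hcyc]
      rw [pow_succ', mvL_mul]
    by_cases h : (j : ℕ) + 1 < m
    · rw [h1, if_pos h, one_smul]
      have h2 : fc j = ⟨(j : ℕ) + 1, h⟩ := by simp [hfc, h]
      rw [h2]
    · have hjm : (j : ℕ) + 1 = m := by have := j.2; omega
      have h2 : fc j = ⟨0, hm0⟩ := by simp [hfc, h]
      rw [h1, if_neg h, h2, hcyc0, hjm, he1U]
  set wc : Fin m → ℂ := fun j => if (j : ℕ) + 1 < m then μf ((j : ℕ) + 1) else c * μf 0 with hwc
  have hPcyc : ∀ j : Fin m, mvL P (cyc j) = μf ((j : ℕ)) • cyc j := by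
    intro j
    have := hcyc_eig j 0
    rwa [Pk_zero, Nat.zero_add] at this
  have hAcyc : ∀ j : Fin m, mvL (P * U) (cyc j) = wc j • cyc (fc j) := by
    intro j
    rw [mvL_mul, hUcyc j]
    by_cases h : (j : ℕ) + 1 < m
    · rw [if_pos h, one_smul, hPcyc (fc j)]
      have h2 : ((fc j : Fin m) : ℕ) = (j : ℕ) + 1 := by simp [hfc, h]
      rw [h2]
      simp only [hwc, if_pos h]
    · rw [if_neg h, _root_.map_smul, hPcyc (fc j)]
      have h2 : ((fc j : Fin m) : ℕ) = 0 := by simp [hfc, h]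
      rw [h2, smul_smul]
      simp only [hwc, if_neg h]
  -- the span of the cycle and its orthogonal complement in W
  set S : Submodule ℂ Ee := Submodule.span ℂ (Set.range cyc) with hS
  have hgen_mem : ∀ j, cyc j ∈ S := fun j => Submodule.subset_span ⟨j, rfl⟩
  have hSW : S ≤ W := Submodule.span_le.mpr (by rintro x ⟨j, rfl⟩; exact hcyc_mem j)
  have hinvS : ∀ (M : Matrix (Fin n) (Fin n) ℂ), (∀ j, mvL M (cyc j) ∈ S) →
      ∀ x ∈ S, mvL M x ∈ S := by
    intro M hM x hx
    have hle : S ≤ Submodule.comap (mvL M) S :=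
      Submodule.span_le.mpr (by rintro y ⟨j, rfl⟩; exact hM j)
    exact hle hx
  have hSU : ∀ x ∈ S, mvL U x ∈ S := by
    apply hinvS
    intro j
    rw [hUcyc j]
    exact Submodule.smul_mem _ _ (hgen_mem _)
  have hSUH : ∀ x ∈ S, mvL Uᴴ x ∈ S := by
    apply hinvS
    intro j
    by_cases h : (j : ℕ) = 0
    · have hj : cyc j = e1 := by
        have : j = ⟨0, hm0⟩ := Fin.ext h
        rw [this, hcyc0]
      have h1 : mvL Uᴴ (mvL (U ^ m) e1) = mvL (U ^ (m - 1)) e1 := by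
        rw [← mvL_mul]
        congr 1
        have hsp : U ^ m = U * U ^ (m - 1) := by
          rw [← pow_succ']
          congr 1
          omega
        rw [hsp, ← mul_assoc, hU, one_mul]
      rw [he1U, _root_.map_smul] at h1
      have h3 : mvL Uᴴ e1 = c⁻¹ • mvL (U ^ (m - 1)) e1 := by
        rw [← h1, smul_smul, inv_mul_cancel₀ hcne, one_smul]
      have h4 : mvL (U ^ (m - 1)) e1 = cyc ⟨m - 1, by omega⟩ := rfl
      rw [hj, h3, h4]
      exact Submodule.smul_mem _ _ (hgen_mem _)
    · have h1 : mvL Uᴴ (cyc j) = cyc ⟨(j : ℕ) - 1, by have := j.2; omega⟩ := by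
        simp only [hcyc]
        rw [← mvL_mul]
        congr 1
        have hsp : U ^ (j : ℕ) = U * U ^ ((j : ℕ) - 1) := by
          rw [← pow_succ']
          congr 1
          omega
        rw [hsp, ← mul_assoc, hU, one_mul]
      rw [h1]
      exact hgen_mem _
  have hSP : ∀ k, ∀ x ∈ S, mvL (Pk P U k) x ∈ S := by
    intro k
    apply hinvS
    intro j
    rw [hcyc_eig j k]
    exact Submodule.smul_mem _ _ (hgen_mem j)
  have hSrank : finrank ℂ S = m := by
    rw [hS, finrank_span_eq_card hcyc_ON.linearIndependent, Fintype.card_fin]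
  have hm_le : m ≤ d := by
    have h1 := Submodule.finrank_mono hSW
    rw [hSrank, hW] at h1
    exact h1
  set W' : Submodule ℂ Ee := Sᗮ ⊓ W with hW'def
  have hW'rank : finrank ℂ W' = d - m := by
    apply Submodule.finrank_add_inf_finrank_orthogonal' hSW
    rw [hSrank, hW]
    omega
  have hW'inv : ∀ (M : Matrix (Fin n) (Fin n) ℂ), (∀ s ∈ S, mvL Mᴴ s ∈ S) →
      (∀ x ∈ W, mvL M x ∈ W) → ∀ x ∈ W', mvL M x ∈ W' := by
    intro M hMS hMW x hx
    rw [hW'def, Submodule.mem_inf] at hx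
    rw [hW'def, Submodule.mem_inf]
    refine ⟨?_, hMW x hx.2⟩
    rw [Submodule.mem_orthogonal]
    intro s hs
    rw [inner_mvL_right]
    exact (Submodule.mem_orthogonal _ _).mp hx.1 _ (hMS s hs)
  have hW'U : ∀ x ∈ W', mvL U x ∈ W' := hW'inv U hSUH hUW
  have hW'UH : ∀ x ∈ W', mvL Uᴴ x ∈ W' := by
    apply hW'inv Uᴴ _ hUHW
    rw [Matrix.conjTranspose_conjTranspose]
    exact hSU
  have hW'P : ∀ k, ∀ x ∈ W', mvL (Pk P U k) x ∈ W' := by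
    intro k
    apply hW'inv (Pk P U k) _ (hPW k)
    rw [(Pk_herm hP k).eq]
    exact hSP k
  obtain ⟨v', g', w', hv'ON, hv'mem, hv'act⟩ :=
    IH (d - m) (by omega) W' hW'rank hW'U hW'UH hW'P
  -- assemble
  have horth : ∀ x ∈ W', ∀ s ∈ S, (inner ℂ s x : ℂ) = 0 := by
    intro x hx s hs
    rw [hW'def, Submodule.mem_inf] at hx
    exact (Submodule.mem_orthogonal _ _).mp hx.1 _ hs
  have hv'W : ∀ j, v' j ∈ W := by
    intro j
    have hj := hv'mem j
    rw [hW'def, Submodule.mem_inf] at hj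
    exact hj.2
  have hd_eq : m + (d - m) = d := by omega
  set eqv : Fin m ⊕ Fin (d - m) ≃ Fin d := finSumFinEquiv.trans (finCongr hd_eq) with heqv
  set vS : Fin m ⊕ Fin (d - m) → Ee := Sum.elim cyc v' with hvS
  set gS : Equiv.Perm (Fin m ⊕ Fin (d - m)) := Equiv.sumCongr gc g' with hgS
  set wS : Fin m ⊕ Fin (d - m) → ℂ := Sum.elim wc w' with hwS
  have hvS_ON : Orthonormal ℂ vS := by
    rw [orthonormal_iff_ite]
    rintro (i | i) (j | j)
    · have := orthonormal_iff_ite.mp hcyc_ON i j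
      simp only [hvS, Sum.elim_inl]
      rw [this]
      by_cases h : i = j
      · subst h; rw [if_pos rfl, if_pos rfl]
      · rw [if_neg h, if_neg (by simp [h])]
    · simp only [hvS, Sum.elim_inl, Sum.elim_inr]
      rw [if_neg (by simp)]
      exact horth _ (hv'mem j) _ (hgen_mem i)
    · simp only [hvS, Sum.elim_inl, Sum.elim_inr]
      rw [if_neg (by simp)]
      rw [inner_eq_zero_symm]
      exact horth _ (hv'mem i) _ (hgen_mem j)
    · have := orthonormal_iff_ite.mp hv'ON i j
      simp only [hvS, Sum.elim_inr]
      rw [this]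
      by_cases h : i = j
      · subst h; rw [if_pos rfl, if_pos rfl]
      · rw [if_neg h, if_neg (by simp [h])]
  have hvS_mem : ∀ s, vS s ∈ W := by
    rintro (j | j)
    · exact hcyc_mem j
    · exact hv'W j
  have hvS_act : ∀ s, mvL (P * U) (vS s) = wS s • vS (gS s) := by
    rintro (j | j)
    · simp only [hvS, hwS, hgS, Sum.elim_inl, Equiv.sumCongr_apply, Sum.map_inl]
      rw [hgc_apply]
      exact hAcyc j
    · simp only [hvS, hwS, hgS, Sum.elim_inr, Equiv.sumCongr_apply, Sum.map_inr]
      exact hv'act j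
  refine ⟨vS ∘ eqv.symm, eqv.permCongr gS, wS ∘ eqv.symm, ?_, ?_, ?_⟩
  · exact hvS_ON.comp _ eqv.symm.injective
  · intro i
    exact hvS_mem _
  · intro i
    have h1 := hvS_act (eqv.symm i)
    simp only [Function.comp_apply, Equiv.permCongr_apply]
    rw [Equiv.symm_apply_apply]
    exact h1

end PU
end
end WPaux

open Module in
theorem polar_commute_pow_unitEquivWeightedPerm {n : ℕ}
    (P U A : Matrix (Fin n) (Fin n) ℂ) (hP : P.PosSemidef) (hU : Uᴴ * U = 1)
    (hA : A = P * U) (hcomm : ∀ k : ℕ, Commute ((Uᴴ) ^ k * P * U ^ k) P) :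
    ∃ (V B : Matrix (Fin n) (Fin n) ℂ), Vᴴ * V = 1 ∧ IsWeightedPerm B ∧ A = Vᴴ * B * V := by
  obtain ⟨v, g, w, hON, -, hact⟩ :=
    WPaux.core hP.1 hU (fun k => (hcomm k).eq) n ⊤
      (by rw [finrank_top, finrank_euclideanSpace_fin])
      (fun x _ => trivial) (fun x _ => trivial) (fun k x _ => trivial)
  set V : Matrix (Fin n) (Fin n) ℂ := Matrix.of (fun i j => star (v i j)) with hV
  have hinner : ∀ x y : EuclideanSpace ℂ (Fin n), (inner ℂ x y : ℂ) = ∑ k, star (x k) * y k := by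
    intro x y
    rw [PiLp.inner_apply]
    simp only [RCLike.inner_apply, starRingEnd_apply]
    exact Finset.sum_congr rfl (fun _ _ => mul_comm _ _)
  have hVV : V * Vᴴ = 1 := by
    ext i j
    have h := orthonormal_iff_ite.mp hON i j
    rw [hinner] at h
    simp only [Matrix.mul_apply, hV, Matrix.of_apply, Matrix.conjTranspose_apply, star_star,
      Matrix.one_apply]
    exact h
  have hV'V : Vᴴ * V = 1 := mul_eq_one_comm.mp hVV
  have hAv : ∀ j, WPaux.mvL A (v j) = w j • v (g j) := by
    intro j
    rw [hA]
    exact hact j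
  have hBij : ∀ i j, (V * A * Vᴴ) i j = if i = g j then w j else 0 := by
    intro i j
    have h1 : (V * A * Vᴴ) i j = (inner ℂ (v i) ((WPaux.mvL A) (v j)) : ℂ) := by
      rw [hinner]
      simp only [Matrix.mul_apply, hV, Matrix.of_apply, Matrix.conjTranspose_apply, star_star,
        WPaux.mvL, LinearMap.coe_mk, AddHom.coe_mk, Matrix.mulVec, dotProduct,
        Finset.mul_sum, Finset.sum_mul]
      rw [Finset.sum_comm]
      apply Finset.sum_congr rfl; intro l _; apply Finset.sum_congr rfl; intro k _
      ring
    have h2 : (WPaux.mvL A) (v j) = w j • v (g j) := hAv j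
    rw [h1, h2, inner_smul_right, orthonormal_iff_ite.mp hON i (g j)]
    by_cases h : i = g j <;> simp [h]
  refine ⟨V, V * A * Vᴴ, hV'V, ⟨?_, ?_⟩, ?_⟩
  · intro i j₁ j₂ h1 h2
    rw [hBij] at h1 h2
    have e1 : i = g j₁ := by by_contra hh; rw [if_neg hh] at h1; exact h1 rfl
    have e2 : i = g j₂ := by by_contra hh; rw [if_neg hh] at h2; exact h2 rfl
    exact g.injective (e1 ▸ e2)
  · intro j i₁ i₂ h1 h2
    rw [hBij] at h1 h2
    have e1 : i₁ = g j := by by_contra hh; rw [if_neg hh] at h1; exact h1 rfl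
    have e2 : i₂ = g j := by by_contra hh; rw [if_neg hh] at h2; exact h2 rfl
    rw [e1, e2]
  · calc A = 1 * A * 1 := by rw [one_mul, mul_one]
    _ = Vᴴ * V * A * (Vᴴ * V) := by rw [hV'V]
    _ = Vᴴ * (V * A * Vᴴ) * V := by simp only [mul_assoc]
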